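/- If P is an invertible module over a commutative ring k (i.e., P ⊗ P* ≅ k canonically) and A is a P-Frobenius k-algebra, then A is quasi-Frobenius in Müller's sense: A is finitely generated projective over k and A as a right A-module is a direct summand of a finite direct sum of copies of the k-dual A* as a right A-module. -/

import Mathlib

/-- `P` is an invertible `k`-module: finitely generated projective with the canonical
evaluation `P ⊗ P* → k` bijective (equivalently, f.g. projective of constant rank 1). -/
def IsInvertibleModule (k P : Type*) [CommRing k] [AddCommGroup P] [Module k P] : Prop :=
  Module.Finite k P ∧ Module.Projective k P ∧ Function.Bijective (contractRight k P)

/-- Currying `Fin n`-tuples of functionals into a map to `k^n`, as a linear map. -/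
def piHom (k A : Type*) [CommRing k] [AddCommGroup A] [Module k A] (n : ℕ) :
    (Fin n → Module.Dual k A) →ₗ[k] (A →ₗ[k] (Fin n → k)) where
  toFun g := LinearMap.pi g
  map_add' g g' := LinearMap.ext fun z => funext fun i => by simp
  map_smul' c g := LinearMap.ext fun z => funext fun i => by simp

/-- A `P`-Frobenius algebra `A` (f.g. projective over `k` with `A ≅ Hom_k(A,P)` as right
`A`-modules, where `(f·a)(x) = f(ax)`) is quasi-Frobenius in Müller's sense: `A` as a right
`A`-module is a direct summand of a finite direct sum of copies of `A* = Hom_k(A,k)`,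
with its right `A`-module structure `(f·a)(x) = f(ax)`. -/
theorem pFrobenius_is_QF (k A P : Type*) [CommRing k] [AddCommGroup P] [Module k P]
    [Ring A] [Algebra k A] (hP : IsInvertibleModule k P)
    (hfin : Module.Finite k A) (hproj : Module.Projective k A)
    (hFrob : ∃ Φ : A ≃ₗ[k] (A →ₗ[k] P), ∀ a x z : A, Φ (x * a) z = Φ x (a * z)) :
    ∃ (n : ℕ) (ι : A →ₗ[k] (Fin n → Module.Dual k A))
      (π : (Fin n → Module.Dual k A) →ₗ[k] A),
      (∀ x : A, π (ι x) = x) ∧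
      (∀ (x a : A), ι (x * a) = fun i => (ι x i).comp (LinearMap.mulLeft k a)) ∧
      (∀ (g : Fin n → Module.Dual k A) (a : A),
        π (fun i => (g i).comp (LinearMap.mulLeft k a)) = π g * a) := by
  obtain ⟨hPfin, hPproj, -⟩ := hP
  obtain ⟨Φ, hΦ⟩ := hFrob
  -- P is a direct summand of k^n
  obtain ⟨n, f, hf⟩ := Module.Finite.exists_fin' k P
  obtain ⟨s, hs⟩ := Module.projective_lifting_property f LinearMap.id hf
  refine ⟨n, LinearMap.pi (fun i =>
      (LinearMap.llcomp k A P k ((LinearMap.proj i).comp s)).comp Φ.toLinearMap),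
    Φ.symm.toLinearMap.comp ((LinearMap.llcomp k A (Fin n → k) P f).comp (piHom k A n)),
    ?_, ?_, ?_⟩
  · intro x
    simp only [LinearMap.comp_apply, LinearEquiv.coe_coe, piHom, LinearMap.coe_mk,
      AddHom.coe_mk, LinearMap.llcomp_apply]
    rw [← Φ.symm_apply_apply x]
    congr 1
    ext z
    have h := LinearMap.congr_fun hs (Φ x z)
    simp only [LinearMap.comp_apply, LinearMap.id_apply] at h
    refine (congrArg f ?_).trans h
    ext i
    simp
  · intro x a
    funext i
    ext z
    simp [hΦ a x z]
  · intro g a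
    apply Φ.injective
    ext z
    simp only [LinearMap.comp_apply, LinearEquiv.coe_coe, piHom, LinearMap.coe_mk,
      AddHom.coe_mk, LinearMap.llcomp_apply, LinearEquiv.apply_symm_apply, hΦ a]
    congr 1
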